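/- arXiv:2108.11862 — 2 statements merged into one kernel-verified Lean document; each statement's English description precedes it below -/
import Mathlib

section
/- The ℚ-vector space Λ^3 k(t)^× is spanned by the image of the multiplication map k(t)^× ⊗ Λ^2 k^× → Λ^3 k(t)^×, f⊗(a∧b) ↦ f∧a∧b, together with the image of δ_3: B_2(k(t))⊗k(t)^× → Λ^3 k(t)^×. -/
open scoped TensorProduct
open ExteriorAlgebra

noncomputable section ChowPrelim

universe u

/-- The ℚ-vector space `F^× ⊗ ℚ` attached to a field `F`. -/
abbrev UnitsQ (F : Type u) [Field F] : Type u := ℚ ⊗[ℤ] (Additive Fˣ)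

/-- The canonical map `F → F^× ⊗ ℚ`, sending a nonzero `x` to `x ⊗ 1` and `0` to `0`. -/
noncomputable def mkQ {F : Type u} [Field F] (x : F) : UnitsQ F :=
  letI := Classical.dec (x = 0)
  if h : x = 0 then 0 else (1 : ℚ) ⊗ₜ[ℤ] (Additive.ofMul (Units.mk0 x h))

/-- The wedge `x₁ ∧ ⋯ ∧ xₙ ∈ Λ^n (F^× ⊗ ℚ)` of a family of elements of `F`. -/
noncomputable def wedgeF {F : Type u} [Field F] (n : ℕ) (x : Fin n → F) :
    ⋀[ℚ]^n (UnitsQ F) :=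
  ⟨ExteriorAlgebra.ιMulti ℚ n (fun i => mkQ (x i)),
    ExteriorAlgebra.ιMulti_range ℚ n ⟨_, rfl⟩⟩

/-- Wedge of an abstract family of vectors. -/
noncomputable def wedgeV {M : Type u} [AddCommGroup M] [Module ℚ M] (n : ℕ) (v : Fin n → M) :
    ⋀[ℚ]^n M :=
  ⟨ExteriorAlgebra.ιMulti ℚ n v, ExteriorAlgebra.ιMulti_range ℚ n ⟨_, rfl⟩⟩

/-- The product `a ∧ v₁ ∧ ⋯ ∧ v_q : Λ^r M` of an element `a ∈ Λ^p M` with `q` further vectors,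
where `p + q = r`. -/
noncomputable def wedgeMulC {M : Type u} [AddCommGroup M] [Module ℚ M] (p q r : ℕ)
    (h : p + q = r) (a : ⋀[ℚ]^p M) (v : Fin q → M) : ⋀[ℚ]^r M :=
  ⟨a.1 * (ExteriorAlgebra.ιMulti ℚ q v : ExteriorAlgebra ℚ M), by
    subst h
    have hmem : (ExteriorAlgebra.ιMulti ℚ q v : ExteriorAlgebra ℚ M) ∈
        (LinearMap.range (ι ℚ : M →ₗ[ℚ] ExteriorAlgebra ℚ M)) ^ q :=
      ExteriorAlgebra.ιMulti_range ℚ q ⟨_, rfl⟩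
    have h2 := Submodule.mul_mem_mul a.2 hmem
    rw [← pow_add] at h2
    exact h2⟩

/-- The functorial map `Λ^n M → Λ^n N` induced by a linear map. -/
noncomputable def powMap {M N : Type u} [AddCommGroup M] [Module ℚ M]
    [AddCommGroup N] [Module ℚ N] (n : ℕ) (f : M →ₗ[ℚ] N) :
    ⋀[ℚ]^n M →ₗ[ℚ] ⋀[ℚ]^n N :=
  (ExteriorAlgebra.map f).toLinearMap.restrict (p := ⋀[ℚ]^n M) (q := ⋀[ℚ]^n N)
    (by
      intro x hx
      have h : Submodule.map (ExteriorAlgebra.map f).toLinearMap (⋀[ℚ]^n M) ≤ ⋀[ℚ]^n N := by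
        rw [← ExteriorAlgebra.ιMulti_span_fixedDegree, ← ExteriorAlgebra.ιMulti_span_fixedDegree,
          Submodule.map_span]
        refine Submodule.span_le.2 ?_
        rintro _ ⟨_, ⟨v, rfl⟩, rfl⟩
        exact Submodule.subset_span ⟨f ∘ v, (ExteriorAlgebra.map_apply_ιMulti f v).symm⟩
      exact h ⟨x, hx, rfl⟩)

/-- The linear map `F^× ⊗ ℚ → K^× ⊗ ℚ` induced by a field embedding. -/
noncomputable def unitsQMap {F K : Type u} [Field F] [Field K] (j : F →+* K) :
    UnitsQ F →ₗ[ℚ] UnitsQ K :=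
  LinearMap.baseChange ℚ
    ((MonoidHom.toAdditive (Units.map (j : F →* K))).toIntLinearMap)

section PreBloch

variable (F : Type u) [Field F]

/-- Auxiliary "difference" of two points of `P^1(F) = Option F` (`none` is `∞`),
used to define the cross-ratio. -/
def pdiff : Option F → Option F → F
  | some a, some b => a - b
  | _, _ => 1

/-- The cross-ratio of four points of `P^1(F)`, as an element of `F`
(it lies in `F ∖ {0,1}` when the four points are distinct). -/
def crossRatio (x1 x2 x3 x4 : Option F) : F :=
  (pdiff F x1 x3 * pdiff F x2 x4) / (pdiff F x1 x4 * pdiff F x2 x3)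

/-- The subspace of relations defining the pre-Bloch group: `{0}₂, {1}₂, {∞}₂` and the
five-term cross-ratio relations for five distinct points of `P^1(F)`. -/
def B2Rel : Submodule ℚ (Option F →₀ ℚ) :=
  Submodule.span ℚ
    ({Finsupp.single (some 0) 1, Finsupp.single (some 1) 1, Finsupp.single none 1} ∪
      {r | ∃ x : Fin 5 → Option F, Function.Injective x ∧
        r = ∑ i : Fin 5, ((-1 : ℚ) ^ (i : ℕ)) •
          Finsupp.single (some (crossRatio F (x (i.succAbove 0)) (x (i.succAbove 1))
            (x (i.succAbove 2)) (x (i.succAbove 3)))) (1 : ℚ)})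

/-- The pre-Bloch group `B₂(F)` (with ℚ-coefficients). -/
abbrev B2 : Type u := (Option F →₀ ℚ) ⧸ B2Rel F

/-- The generator `{x}₂` of the pre-Bloch group. -/
def B2.gen {F : Type u} [Field F] (x : F) : B2 F :=
  Submodule.Quotient.mk (Finsupp.single (some x) 1)

end PreBloch

section Deltas

variable (F : Type u) [Field F]

/-- `d` is the differential `δ₂ : B₂(F) → Λ² F^×`, `{x}₂ ↦ x ∧ (1-x)`. -/
def IsDelta2 (d : B2 F →ₗ[ℚ] ⋀[ℚ]^2 (UnitsQ F)) : Prop :=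
  ∀ x : F, x ≠ 0 → x ≠ 1 → d (B2.gen x) = wedgeF 2 ![x, 1 - x]

/-- `d` is the differential `δ₃ : B₂(F) ⊗ F^× → Λ³ F^×`, `{x}₂ ⊗ y ↦ x ∧ (1-x) ∧ y`. -/
def IsDelta3 (d : B2 F ⊗[ℚ] UnitsQ F →ₗ[ℚ] ⋀[ℚ]^3 (UnitsQ F)) : Prop :=
  ∀ x y : F, x ≠ 0 → x ≠ 1 → y ≠ 0 →
    d (B2.gen x ⊗ₜ mkQ y) = wedgeF 3 ![x, 1 - x, y]

/-- `d` is the differential `δ₄ : B₂(F) ⊗ Λ² F^× → Λ⁴ F^×`,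
`{x}₂ ⊗ (y ∧ z) ↦ x ∧ (1-x) ∧ y ∧ z`. -/
def IsDelta4 (d : B2 F ⊗[ℚ] (⋀[ℚ]^2 (UnitsQ F)) →ₗ[ℚ] ⋀[ℚ]^4 (UnitsQ F)) : Prop :=
  ∀ x y z : F, x ≠ 0 → x ≠ 1 → y ≠ 0 → z ≠ 0 →
    d (B2.gen x ⊗ₜ wedgeF 2 ![y, z]) = wedgeF 4 ![x, 1 - x, y, z]

end Deltas

section Valuations

variable {F K : Type u} [Field F] [Field K]

/-- `ν` is (the additive form of) a discrete valuation on `F`: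
a surjection onto `ℤ` defined on `F ∖ {0}`, multiplicative, and
satisfying the ultrametric inequality. -/
structure IsDVal (ν : F → ℤ) : Prop where
  map_mul : ∀ x y : F, x ≠ 0 → y ≠ 0 → ν (x * y) = ν x + ν y
  map_add : ∀ x y : F, x ≠ 0 → y ≠ 0 → x + y ≠ 0 → min (ν x) (ν y) ≤ ν (x + y)
  surj : ∀ n : ℤ, ∃ x : F, x ≠ 0 ∧ ν x = n

/-- `res : F → K` realizes `K` as the residue field of the discrete valuation `ν`:
it is a surjective ring homomorphism on the valuation ring `O_ν` with kernel the
maximal ideal `m_ν` (and arbitrary elsewhere). -/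
structure IsResidue (ν : F → ℤ) (res : F → K) : Prop where
  map_one : res 1 = 1
  map_add : ∀ x y : F, (x = 0 ∨ 0 ≤ ν x) → (y = 0 ∨ 0 ≤ ν y) →
    res (x + y) = res x + res y
  map_mul : ∀ x y : F, (x = 0 ∨ 0 ≤ ν x) → (y = 0 ∨ 0 ≤ ν y) →
    res (x * y) = res x * res y
  zero_iff : ∀ x : F, (x = 0 ∨ 0 ≤ ν x) → (res x = 0 ↔ (x = 0 ∨ 0 < ν x))
  surj : ∀ z : K, ∃ x : F, (x = 0 ∨ 0 ≤ ν x) ∧ res x = z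

/-- `D` is the tame symbol `∂_ν^{(n+1)} : Λ^{n+1} F^× → Λ^n K^×` attached to the discrete
valuation `ν` with residue field `K` (via `res`): it is characterized by
`∂(π ∧ u₂ ∧ ⋯ ∧ u_{n+1}) = ū₂ ∧ ⋯ ∧ ū_{n+1}` for a uniformizer `π` and units `uᵢ`. -/
def IsTame (ν : F → ℤ) (res : F → K) (n : ℕ)
    (D : ⋀[ℚ]^(n + 1) (UnitsQ F) →ₗ[ℚ] ⋀[ℚ]^n (UnitsQ K)) : Prop :=
  ∀ (π : F) (u : Fin n → F), π ≠ 0 → ν π = 1 → (∀ i, u i ≠ 0 ∧ ν (u i) = 0) →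
    D (wedgeF (n + 1) (Fin.cons π u)) = wedgeF n (fun i => res (u i))

/-- `D` is the tame symbol `∂_ν^{(2)} : Λ² F^× → K^×`, with target the residue field itself. -/
def IsTame2U (ν : F → ℤ) (res : F → K) (D : ⋀[ℚ]^2 (UnitsQ F) →ₗ[ℚ] UnitsQ K) : Prop :=
  ∀ π u : F, π ≠ 0 → ν π = 1 → u ≠ 0 → ν u = 0 → D (wedgeF 2 ![π, u]) = mkQ (res u)

/-- `D` is the tame symbol `∂_ν : B₂(F) ⊗ F^× → B₂(K)`. -/
def IsTameB1 (ν : F → ℤ) (res : F → K)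
    (D : B2 F ⊗[ℚ] UnitsQ F →ₗ[ℚ] B2 K) : Prop :=
  (∀ a b : F, a ≠ 0 → a ≠ 1 → ν a ≠ 0 → b ≠ 0 → D (B2.gen a ⊗ₜ mkQ b) = 0) ∧
  (∀ u b : F, u ≠ 0 → ν u = 0 → b ≠ 0 →
    D (B2.gen u ⊗ₜ mkQ b) = -((ν b : ℚ) • B2.gen (res u)))

/-- `D` is the tame symbol `∂_ν : B₂(F) ⊗ Λ² F^× → B₂(K) ⊗ K^×`, where `D2` is the tame
symbol `∂_ν^{(2)}`. -/
def IsTameB2 (ν : F → ℤ) (res : F → K) (D2 : ⋀[ℚ]^2 (UnitsQ F) →ₗ[ℚ] UnitsQ K)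
    (D : B2 F ⊗[ℚ] (⋀[ℚ]^2 (UnitsQ F)) →ₗ[ℚ] B2 K ⊗[ℚ] UnitsQ K) : Prop :=
  (∀ (a : F) (b : ⋀[ℚ]^2 (UnitsQ F)), a ≠ 0 → a ≠ 1 → ν a ≠ 0 → D (B2.gen a ⊗ₜ b) = 0) ∧
  (∀ (u : F) (b : ⋀[ℚ]^2 (UnitsQ F)), u ≠ 0 → ν u = 0 →
    D (B2.gen u ⊗ₜ b) = -(B2.gen (res u) ⊗ₜ D2 b))

/-- `D` is the tame symbol `∂_ν : B₂(F) ⊗ Λ^{n+1} F^× → B₂(K) ⊗ Λ^n K^×`, where `Dn` is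
the tame symbol `∂_ν^{(n+1)}`. -/
def IsTameBGen (ν : F → ℤ) (res : F → K) (n : ℕ)
    (Dn : ⋀[ℚ]^(n + 1) (UnitsQ F) →ₗ[ℚ] ⋀[ℚ]^n (UnitsQ K))
    (D : B2 F ⊗[ℚ] (⋀[ℚ]^(n + 1) (UnitsQ F)) →ₗ[ℚ] B2 K ⊗[ℚ] (⋀[ℚ]^n (UnitsQ K))) : Prop :=
  (∀ (a : F) (b : ⋀[ℚ]^(n + 1) (UnitsQ F)), a ≠ 0 → a ≠ 1 → ν a ≠ 0 →
    D (B2.gen a ⊗ₜ b) = 0) ∧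
  (∀ (u : F) (b : ⋀[ℚ]^(n + 1) (UnitsQ F)), u ≠ 0 → ν u = 0 →
    D (B2.gen u ⊗ₜ b) = -(B2.gen (res u) ⊗ₜ Dn b))

end Valuations

section Fields

variable (k F : Type u) [Field k] [Field F] [Algebra k F]

/-- `F` is a finitely generated extension of `k` of transcendence degree `1`. -/
def IsFields1 : Prop :=
  (∃ s : Finset F, IntermediateField.adjoin k (s : Set F) = ⊤) ∧
  ∃ x : F, Transcendental k x ∧
    Algebra.IsAlgebraic (IntermediateField.adjoin k {x}) F

/-- `F` is a finitely generated extension of `k` of transcendence degree `2`. -/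
def IsFields2 : Prop :=
  (∃ s : Finset F, IntermediateField.adjoin k (s : Set F) = ⊤) ∧
  ∃ x y : F, AlgebraicIndependent k ![x, y] ∧
    Algebra.IsAlgebraic (IntermediateField.adjoin k {x, y}) F

/-- `res : F → k` is the canonical residue map of `ν` onto `k`
(restricting to the identity on `k`). -/
def GoodResK (ν : F → ℤ) (res : F → k) : Prop :=
  IsResidue ν res ∧ ∀ c : k, res (algebraMap k F c) = c

/-- The set `val(F)` of discrete valuations of `F` trivial on `k` with residue field `k`. -/
def ValInd : Type u :=
  {ν : F → ℤ // IsDVal ν ∧ (∀ c : k, c ≠ 0 → ν (algebraMap k F c) = 0) ∧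
    ∃ res : F → k, GoodResK k F ν res}

/-- `h : Λ³ F^× → B₂(k)` is a lifted reciprocity map on `F ∈ Fields₁`:
(1) `-δ₂(h a) = Σ_{ν ∈ val(F)} ∂_ν^{(3)} a`;
(2) `h (δ₃ c) = Σ_{ν ∈ val(F)} ∂_ν c`;
(3) `h` vanishes on the image of `Λ² F^× ⊗ k^× → Λ³ F^×`. -/
def IsLiftedRec (h : ⋀[ℚ]^3 (UnitsQ F) →ₗ[ℚ] B2 k) : Prop :=
  (∀ d2 : B2 k →ₗ[ℚ] ⋀[ℚ]^2 (UnitsQ k), IsDelta2 k d2 →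
    ∀ res : ∀ _ : ValInd k F, F → k, (∀ v : ValInd k F, GoodResK k F v.1 (res v)) →
    ∀ D : ∀ _ : ValInd k F, ⋀[ℚ]^3 (UnitsQ F) →ₗ[ℚ] ⋀[ℚ]^2 (UnitsQ k),
      (∀ v : ValInd k F, IsTame v.1 (res v) 2 (D v)) →
    ∀ a : ⋀[ℚ]^3 (UnitsQ F), -(d2 (h a)) = ∑ᶠ v : ValInd k F, D v a) ∧
  (∀ d3 : B2 F ⊗[ℚ] UnitsQ F →ₗ[ℚ] ⋀[ℚ]^3 (UnitsQ F), IsDelta3 F d3 →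
    ∀ res : ∀ _ : ValInd k F, F → k, (∀ v : ValInd k F, GoodResK k F v.1 (res v)) →
    ∀ DB : ∀ _ : ValInd k F, B2 F ⊗[ℚ] UnitsQ F →ₗ[ℚ] B2 k,
      (∀ v : ValInd k F, IsTameB1 v.1 (res v) (DB v)) →
    ∀ c : B2 F ⊗[ℚ] UnitsQ F, h (d3 c) = ∑ᶠ v : ValInd k F, DB v c) ∧
  (∀ (y z : F) (c : k), y ≠ 0 → z ≠ 0 → c ≠ 0 →
    h (wedgeF 3 ![y, z, algebraMap k F c]) = 0)

end Fields

/-- The degree `[K : j(F)]` of a field embedding. -/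
noncomputable def fieldDeg {F K : Type u} [Field F] [Field K] (j : F →+* K) : ℕ :=
  letI : Algebra F K := j.toAlgebra
  Module.finrank F K

/-- The pullback `j^* h = (1/[F₂ : j(F₁)]) · h ∘ j_*` of a lifted reciprocity map. -/
noncomputable def pullRec (k F₁ F₂ : Type u) [Field k] [Field F₁] [Field F₂]
    (j : F₁ →+* F₂) (h : ⋀[ℚ]^3 (UnitsQ F₂) →ₗ[ℚ] B2 k) :
    ⋀[ℚ]^3 (UnitsQ F₁) →ₗ[ℚ] B2 k :=
  ((fieldDeg j : ℚ))⁻¹ • (h ∘ₗ powMap 3 (unitsQMap j))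

end ChowPrelim

noncomputable section ChowPrelim2

universe u

open scoped TensorProduct

/-- The monic irreducible polynomials over `F`, indexing the closed points of `𝔸¹_F`,
i.e. the general discrete valuations of `F(t)`. -/
def MonicIrr (F : Type u) [Field F] : Type u :=
  {p : Polynomial F // p.Monic ∧ Irreducible p}

/-- The residue field `F(p) = F[t]/(p)` of the valuation attached to a monic irreducible
polynomial `p`. -/
def ResField {F : Type u} [Field F] (p : MonicIrr F) : Type u := AdjoinRoot p.1

noncomputable instance ResField.instField {F : Type u} [Field F] (p : MonicIrr F) :
    Field (ResField p) :=
  letI : Fact (Irreducible p.1) := ⟨p.2.2⟩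
  inferInstanceAs (Field (AdjoinRoot p.1))

/-- `ν` is the discrete valuation of `F(t)` attached to the monic irreducible polynomial `p`. -/
def IsNuP {F : Type u} [Field F] (p : MonicIrr F) (ν : RatFunc F → ℤ) : Prop :=
  IsDVal ν ∧ ν (algebraMap (Polynomial F) (RatFunc F) p.1) = 1 ∧
    ∀ g : Polynomial F, g ≠ 0 → ¬(p.1 ∣ g) →
      ν (algebraMap (Polynomial F) (RatFunc F) g) = 0

/-- `res` is the canonical residue map `F(t) → F(p)` of the valuation attached to `p`. -/
def IsResP {F : Type u} [Field F] (p : MonicIrr F) (ν : RatFunc F → ℤ)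
    (res : RatFunc F → ResField p) : Prop :=
  IsResidue ν res ∧ ∀ g : Polynomial F,
    res (algebraMap (Polynomial F) (RatFunc F) g) =
      (AdjoinRoot.mk p.1 g : AdjoinRoot p.1)

/-- Bundled realization of the residue field of a discrete valuation `ν` on `L`
(trivial on `k`): a field `R` with a `k`-algebra structure together with the residue map. -/
structure ResData (k L : Type u) [Field k] [Field L] [Algebra k L] (ν : L → ℤ) :
    Type (u + 1) where
  R : Type u
  [fieldR : Field R]
  [algR : Algebra k R]
  res : L → R
  isRes : IsResidue ν res
  compat : ∀ c : k, res (algebraMap k L c) = algebraMap k R c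

attribute [instance] ResData.fieldR ResData.algR

/-- The set `dval(L)` of divisorial valuations of `L ∈ Fields₂`: discrete valuations trivial
on `k` whose residue field is a finitely generated extension of `k` of transcendence
degree `1`. -/
def DValInd (k L : Type u) [Field k] [Field L] [Algebra k L] : Type u :=
  {ν : L → ℤ // IsDVal ν ∧ (∀ c : k, c ≠ 0 → ν (algebraMap k L c) = 0) ∧
    ∃ rd : ResData k L ν, IsFields1 k rd.R}

/-- A height-one prime ideal (in a domain). -/
def IsHeightOne {R : Type u} [CommRing R] (p : Ideal R) : Prop :=
  p.IsPrime ∧ p ≠ ⊥ ∧ ∀ q : Ideal R, q.IsPrime → q < p → q = ⊥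

/-- `R/p` is regular, i.e. (for a one-dimensional local ring) the maximal ideal of `R/p`
is principal. -/
def QuotRegular {R : Type u} [CommRing R] [IsLocalRing R] (p : Ideal R) : Prop :=
  ∃ t : R, Ideal.map (Ideal.Quotient.mk p) (IsLocalRing.maximalIdeal R) =
    Ideal.span {Ideal.Quotient.mk p t}

/-- The height-one primes `p` of `R` with `R/p` regular. -/
def RegPrimes (R : Type u) [CommRing R] [IsLocalRing R] : Type u :=
  {p : Ideal R // IsHeightOne p ∧ QuotRegular p}

instance RegPrimes.isPrime {R : Type u} [CommRing R] [IsLocalRing R] (p : RegPrimes R) :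
    p.1.IsPrime := p.2.1.1

/-- The residue field `κ(p) = Frac(R/p)` of a prime `p`. -/
def ResFieldP {R : Type u} [CommRing R] [IsLocalRing R] [IsDomain R] (p : RegPrimes R) :
    Type u := FractionRing (R ⧸ p.1)

noncomputable instance ResFieldP.instField {R : Type u} [CommRing R] [IsLocalRing R]
    [IsDomain R] (p : RegPrimes R) : Field (ResFieldP p) :=
  inferInstanceAs (Field (FractionRing (R ⧸ p.1)))

/-- `ν` is the discrete valuation `ν_p` of `L = Frac R` attached to a height-one prime `p`:
it is nonnegative on `R` and positive exactly on `p`. -/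
def IsNuPrime {R L : Type u} [CommRing R] [Field L] [Algebra R L] (p : Ideal R)
    (ν : L → ℤ) : Prop :=
  IsDVal ν ∧ (∀ x : R, x ≠ 0 → 0 ≤ ν (algebraMap R L x)) ∧
    ∀ x : R, x ≠ 0 → (x ∈ p ↔ 0 < ν (algebraMap R L x))

/-- `res` is the canonical residue map `L → κ(p)` of the valuation `ν_p`. -/
def IsResPrime {R L : Type u} [CommRing R] [IsLocalRing R] [IsDomain R] [Field L]
    [Algebra R L] (p : RegPrimes R) (ν : L → ℤ) (res : L → ResFieldP p) : Prop :=
  IsResidue ν res ∧ ∀ x : R,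
    res (algebraMap R L x) =
      algebraMap (R ⧸ p.1) (FractionRing (R ⧸ p.1)) (Ideal.Quotient.mk p.1 x)

/-- `ν̄` is the discrete valuation of `κ(p)` attached to the discrete valuation ring `R/p`:
nonnegative on `R/p` and positive exactly on the image of the maximal ideal of `R`. -/
def IsNuBar {R : Type u} [CommRing R] [IsLocalRing R] [IsDomain R] (p : RegPrimes R)
    (ν : ResFieldP p → ℤ) : Prop :=
  IsDVal ν ∧
  (∀ x : R ⧸ p.1, x ≠ 0 →
    0 ≤ ν (algebraMap (R ⧸ p.1) (FractionRing (R ⧸ p.1)) x)) ∧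
  ∀ x : R, Ideal.Quotient.mk p.1 x ≠ 0 →
    (x ∈ IsLocalRing.maximalIdeal R ↔
      0 < ν (algebraMap (R ⧸ p.1) (FractionRing (R ⧸ p.1)) (Ideal.Quotient.mk p.1 x)))

/-- `res` is the canonical residue map `κ(p) → k` of the valuation `ν̄_p`
(restricting to the identity on `k`). -/
def IsResBar {k R : Type u} [Field k] [CommRing R] [IsLocalRing R] [IsDomain R]
    [Algebra k R] (p : RegPrimes R) (ν : ResFieldP p → ℤ) (res : ResFieldP p → k) : Prop :=
  IsResidue ν res ∧ ∀ c : k,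
    res (algebraMap (R ⧸ p.1) (FractionRing (R ⧸ p.1))
      (Ideal.Quotient.mk p.1 (algebraMap k R c))) = c

/-- The Steinberg relations subspace of `Λ^n F^×` (with ℚ-coefficients). -/
def MilnorRel (F : Type u) [Field F] : (n : ℕ) → Submodule ℚ (⋀[ℚ]^n (UnitsQ F))
  | 0 => ⊥
  | 1 => ⊥
  | (m + 2) => Submodule.span ℚ
      {x | ∃ (a : F) (v : Fin m → F), a ≠ 0 ∧ a ≠ 1 ∧ (∀ i, v i ≠ 0) ∧
        x = wedgeF (m + 2) (Fin.cons a (Fin.cons (1 - a) v))}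

/-- The rational Milnor K-group `K_n^M(F) ⊗ ℚ`: the quotient of `Λ^n F^×` by the
Steinberg relations. -/
def MilnorQ (F : Type u) [Field F] (n : ℕ) : Type u :=
  (⋀[ℚ]^n (UnitsQ F)) ⧸ MilnorRel F n

noncomputable instance MilnorQ.instAddCommGroup (F : Type u) [Field F] (n : ℕ) :
    AddCommGroup (MilnorQ F n) :=
  inferInstanceAs (AddCommGroup ((⋀[ℚ]^n (UnitsQ F)) ⧸ MilnorRel F n))

noncomputable instance MilnorQ.instModule (F : Type u) [Field F] (n : ℕ) :
    Module ℚ (MilnorQ F n) :=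
  inferInstanceAs (Module ℚ ((⋀[ℚ]^n (UnitsQ F)) ⧸ MilnorRel F n))

/-- The class of an element of `Λ^n F^×` in `K_n^M(F) ⊗ ℚ`. -/
def MilnorQ.mk {F : Type u} [Field F] {n : ℕ} (x : ⋀[ℚ]^n (UnitsQ F)) : MilnorQ F n :=
  Submodule.Quotient.mk x

end ChowPrelim2

open scoped TensorProduct

universe u


noncomputable section Stmt4Aux

universe v

open ExteriorAlgebra

namespace Stmt4

variable {F : Type v} [Field F]

lemma mkQ_eq {x : F} (hx : x ≠ 0) :
    mkQ x = (1 : ℚ) ⊗ₜ[ℤ] (Additive.ofMul (Units.mk0 x hx)) := by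
  rw [mkQ, dif_neg hx]

lemma mkQ_one : mkQ (1 : F) = 0 := by
  rw [mkQ_eq (one_ne_zero)]
  have : Units.mk0 (1 : F) one_ne_zero = 1 := Units.ext rfl
  rw [this]
  show (1:ℚ) ⊗ₜ[ℤ] (0 : Additive Fˣ) = 0
  rw [TensorProduct.tmul_zero]

lemma mkQ_mul {x y : F} (hx : x ≠ 0) (hy : y ≠ 0) :
    mkQ (x * y) = mkQ x + mkQ y := by
  rw [mkQ_eq hx, mkQ_eq hy, mkQ_eq (mul_ne_zero hx hy)]
  have h1 : Units.mk0 (x * y) (mul_ne_zero hx hy) = Units.mk0 x hx * Units.mk0 y hy :=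
    Units.ext rfl
  rw [h1]
  have h2 : Additive.ofMul (Units.mk0 x hx * Units.mk0 y hy)
      = Additive.ofMul (Units.mk0 x hx) + Additive.ofMul (Units.mk0 y hy) := rfl
  rw [h2, TensorProduct.tmul_add]

lemma mkQ_neg_one : mkQ (-1 : F) = 0 := by
  have hne : (-1 : F) ≠ 0 := by norm_num
  have h2 : (2 : ℤ) • mkQ (-1 : F) = 0 := by
    rw [mkQ_eq hne, ← TensorProduct.tmul_smul]
    have hu : Units.mk0 (-1 : F) hne * Units.mk0 (-1 : F) hne = 1 := Units.ext (by simp)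
    have hz : (2 : ℤ) • Additive.ofMul (Units.mk0 (-1 : F) hne) = 0 := by
      show Additive.ofMul (Units.mk0 (-1:F) hne ^ (2:ℤ)) = 0
      rw [zpow_two, hu]; rfl
    rw [hz, TensorProduct.tmul_zero]
  rw [← Int.cast_smul_eq_zsmul ℚ] at h2
  exact (smul_eq_zero.mp h2).resolve_left (by norm_num)

lemma mkQ_inv {x : F} (hx : x ≠ 0) : mkQ (x⁻¹ : F) = -mkQ x := by
  have h := mkQ_mul hx (inv_ne_zero hx)
  rw [mul_inv_cancel₀ hx, mkQ_one] at h
  exact eq_neg_of_add_eq_zero_right h.symm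

lemma mkQ_div {x y : F} (hx : x ≠ 0) (hy : y ≠ 0) :
    mkQ (x / y) = mkQ x - mkQ y := by
  rw [div_eq_mul_inv, mkQ_mul hx (inv_ne_zero hy), mkQ_inv hy, sub_eq_add_neg]

lemma mkQ_neg {x : F} (hx : x ≠ 0) : mkQ (-x) = mkQ x := by
  have : (-x : F) = -1 * x := by ring
  rw [this, mkQ_mul (by norm_num) hx, mkQ_neg_one, zero_add]

/-- The span of the `mkQ` values is everything. -/
lemma span_mkQ_top : Submodule.span ℚ {v : UnitsQ F | ∃ f : F, f ≠ 0 ∧ v = mkQ f} = ⊤ := by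
  rw [eq_top_iff]
  rintro w -
  induction w using TensorProduct.induction_on with
  | zero => exact Submodule.zero_mem _
  | add x y hx hy => exact Submodule.add_mem _ hx hy
  | tmul q a =>
      have : (q ⊗ₜ[ℤ] a : UnitsQ F) = q • ((1:ℚ) ⊗ₜ[ℤ] a) := by
        rw [TensorProduct.smul_tmul', smul_eq_mul, mul_one]
      rw [this]
      refine Submodule.smul_mem _ _ (Submodule.subset_span ?_)
      refine ⟨((Additive.toMul a : Fˣ) : F), Units.ne_zero _, ?_⟩
      rw [mkQ_eq (Units.ne_zero _)]
      have hu : Units.mk0 ((Additive.toMul a : Fˣ) : F) (Units.ne_zero _)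
          = (Additive.toMul a : Fˣ) := Units.ext rfl
      rw [hu]
      rfl

section W3

variable {M : Type v} [AddCommGroup M] [Module ℚ M]

/-- The triple wedge as an element of `⋀[ℚ]^3 M`. -/
def w3 (x y z : M) : ⋀[ℚ]^3 M :=
  ⟨ι ℚ x * (ι ℚ y * ι ℚ z), by
    have h1 : ι ℚ x ∈ LinearMap.range (ι ℚ : M →ₗ[ℚ] ExteriorAlgebra ℚ M) :=
      LinearMap.mem_range_self _ x
    have h2 : ι ℚ y ∈ LinearMap.range (ι ℚ : M →ₗ[ℚ] ExteriorAlgebra ℚ M) :=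
      LinearMap.mem_range_self _ y
    have h3 : ι ℚ z ∈ LinearMap.range (ι ℚ : M →ₗ[ℚ] ExteriorAlgebra ℚ M) :=
      LinearMap.mem_range_self _ z
    show _ ∈ LinearMap.range (ι ℚ : M →ₗ[ℚ] ExteriorAlgebra ℚ M) ^ 3
    have hmem := Submodule.mul_mem_mul (Submodule.mul_mem_mul h1 h2) h3
    have heq : LinearMap.range (ι ℚ : M →ₗ[ℚ] ExteriorAlgebra ℚ M) ^ 3
        = LinearMap.range (ι ℚ : M →ₗ[ℚ] ExteriorAlgebra ℚ M) ^ 2 *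
          LinearMap.range (ι ℚ : M →ₗ[ℚ] ExteriorAlgebra ℚ M) := pow_succ _ _
    have heq2 : LinearMap.range (ι ℚ : M →ₗ[ℚ] ExteriorAlgebra ℚ M) ^ 2
        = LinearMap.range (ι ℚ : M →ₗ[ℚ] ExteriorAlgebra ℚ M) *
          LinearMap.range (ι ℚ : M →ₗ[ℚ] ExteriorAlgebra ℚ M) := sq _
    rw [heq, heq2, ← mul_assoc]
    exact hmem⟩

@[simp] lemma w3_coe (x y z : M) :
    (w3 x y z : ExteriorAlgebra ℚ M) = ι ℚ x * (ι ℚ y * ι ℚ z) := rfl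

lemma w3_add_left (x x' y z : M) : w3 (x + x') y z = w3 x y z + w3 x' y z := by
  apply Subtype.ext; simp [w3, map_add, add_mul]

lemma w3_add_mid (x y y' z : M) : w3 x (y + y') z = w3 x y z + w3 x y' z := by
  apply Subtype.ext; simp [w3, map_add, add_mul, mul_add]

lemma w3_add_right (x y z z' : M) : w3 x y (z + z') = w3 x y z + w3 x y z' := by
  apply Subtype.ext; simp [w3, map_add, mul_add]

lemma w3_smul_left (q : ℚ) (x y z : M) : w3 (q • x) y z = q • w3 x y z := by
  apply Subtype.ext; simp [w3, map_smul, smul_mul_assoc]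

lemma w3_smul_mid (q : ℚ) (x y z : M) : w3 x (q • y) z = q • w3 x y z := by
  apply Subtype.ext; simp [w3, map_smul, smul_mul_assoc, mul_smul_comm]

lemma w3_smul_right (q : ℚ) (x y z : M) : w3 x y (q • z) = q • w3 x y z := by
  apply Subtype.ext; simp [w3, map_smul, mul_smul_comm]

lemma w3_zero_left (y z : M) : w3 0 y z = 0 := by
  apply Subtype.ext; simp [w3]

lemma w3_zero_mid (x z : M) : w3 x 0 z = 0 := by
  apply Subtype.ext; simp [w3]

lemma w3_zero_right (x y : M) : w3 x y 0 = 0 := by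
  apply Subtype.ext; simp [w3]

lemma ι_anticomm (x y : M) : ι ℚ x * ι ℚ y = -(ι ℚ y * ι ℚ x) := by
  have := ExteriorAlgebra.ι_add_mul_swap (R := ℚ) x y
  exact eq_neg_of_add_eq_zero_left this

lemma w3_swap12 (x y z : M) : w3 x y z = -w3 y x z := by
  apply Subtype.ext
  show ι ℚ x * (ι ℚ y * ι ℚ z) = -(ι ℚ y * (ι ℚ x * ι ℚ z))
  rw [← mul_assoc, ι_anticomm x y, neg_mul, mul_assoc]

lemma w3_swap23 (x y z : M) : w3 x y z = -w3 x z y := by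
  apply Subtype.ext
  show ι ℚ x * (ι ℚ y * ι ℚ z) = -(ι ℚ x * (ι ℚ z * ι ℚ y))
  rw [ι_anticomm y z, mul_neg]

lemma w3_self12 (x z : M) : w3 x x z = 0 := by
  apply Subtype.ext
  show ι ℚ x * (ι ℚ x * ι ℚ z) = 0
  rw [← mul_assoc, ExteriorAlgebra.ι_sq_zero, zero_mul]

lemma w3_self23 (x y : M) : w3 x y y = 0 := by
  apply Subtype.ext
  show ι ℚ x * (ι ℚ y * ι ℚ y) = 0
  rw [ExteriorAlgebra.ι_sq_zero, mul_zero]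

lemma w3_self13 (x y : M) : w3 x y x = 0 := by
  rw [w3_swap12, w3_self23, neg_zero]

lemma ιMulti_three (v : Fin 3 → M) :
    ExteriorAlgebra.ιMulti ℚ 3 v = ι ℚ (v 0) * (ι ℚ (v 1) * ι ℚ (v 2)) := by
  rw [ExteriorAlgebra.ιMulti_apply]
  simp [List.ofFn_succ, mul_assoc]

lemma wedgeF_eq_w3 (f g h : F) :
    wedgeF 3 ![f, g, h] = w3 (mkQ f) (mkQ g) (mkQ h) := by
  apply Subtype.ext
  show ExteriorAlgebra.ιMulti ℚ 3 (fun i => mkQ (![f, g, h] i)) = _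
  rw [ιMulti_three]
  simp [w3]

/-- If a submodule of `⋀³ M` contains all triple wedges, it is everything. -/
lemma eq_top_of_w3_mem (N : Submodule ℚ (⋀[ℚ]^3 M))
    (h : ∀ x y z : M, w3 x y z ∈ N) : N = ⊤ := by
  rw [eq_top_iff]
  rintro w -
  have hw : (w : ExteriorAlgebra ℚ M) ∈
      Submodule.span ℚ (Set.range (ExteriorAlgebra.ιMulti ℚ 3 (M := M))) := by
    rw [ExteriorAlgebra.ιMulti_span_fixedDegree]; exact w.2
  have hsub : Submodule.span ℚ (Set.range (ExteriorAlgebra.ιMulti ℚ 3 (M := M)))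
      ≤ N.map (⋀[ℚ]^3 M).subtype := by
    refine Submodule.span_le.2 ?_
    rintro _ ⟨v, rfl⟩
    exact ⟨w3 (v 0) (v 1) (v 2), h _ _ _, (ιMulti_three v).symm⟩
  obtain ⟨y, hy, hyw⟩ := hsub hw
  have : y = w := Subtype.ext hyw
  rwa [← this]

/-- Reduce membership of all triple wedges to triple wedges of spanning-set elements. -/
lemma w3_mem_of_span (S : Set M) (hS : Submodule.span ℚ S = ⊤)
    (N : Submodule ℚ (⋀[ℚ]^3 M))
    (h : ∀ x ∈ S, ∀ y ∈ S, ∀ z ∈ S, w3 x y z ∈ N) :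
    ∀ x y z : M, w3 x y z ∈ N := by
  intro x y z
  have hx : x ∈ Submodule.span ℚ S := by rw [hS]; trivial
  induction hx using Submodule.span_induction with
  | mem a ha =>
    have hy : y ∈ Submodule.span ℚ S := by rw [hS]; trivial
    induction hy using Submodule.span_induction with
    | mem b hb =>
      have hz : z ∈ Submodule.span ℚ S := by rw [hS]; trivial
      induction hz using Submodule.span_induction with
      | mem c hc => exact h a ha b hb c hc
      | zero => rw [w3_zero_right]; exact Submodule.zero_mem _
      | add u v _ _ hu hv => rw [w3_add_right]; exact Submodule.add_mem _ hu hv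
      | smul q u _ hu => rw [w3_smul_right]; exact Submodule.smul_mem _ _ hu
    | zero => rw [w3_zero_mid]; exact Submodule.zero_mem _
    | add u v _ _ hu hv => rw [w3_add_mid]; exact Submodule.add_mem _ hu hv
    | smul q u _ hu => rw [w3_smul_mid]; exact Submodule.smul_mem _ _ hu
  | zero => rw [w3_zero_left]; exact Submodule.zero_mem _
  | add u v _ _ hu hv => rw [w3_add_left]; exact Submodule.add_mem _ hu hv
  | smul q u _ hu => rw [w3_smul_left]; exact Submodule.smul_mem _ _ hu

end W3

end Stmt4

end Stmt4Aux


noncomputable section Stmt4Rat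

namespace Stmt4

open Polynomial

variable {k : Type u} [Field k]

/-- Constant rational function. -/
def A (c : k) : RatFunc k := algebraMap k (RatFunc k) c

/-- The linear rational function `t - a`. -/
def LF (a : k) : RatFunc k :=
  algebraMap (Polynomial k) (RatFunc k) (Polynomial.X - Polynomial.C a)

lemma A_eq (c : k) :
    A c = algebraMap (Polynomial k) (RatFunc k) (Polynomial.C c) := by
  rw [A, RatFunc.algebraMap_C, RatFunc.algebraMap_eq_C]

lemma A_ne_zero {c : k} (hc : c ≠ 0) : A c ≠ 0 := by
  intro h
  exact hc ((algebraMap k (RatFunc k)).injective (h.trans (map_zero _).symm))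

lemma LF_ne_zero (a : k) : LF a ≠ 0 := by
  intro h
  have h2 : algebraMap (Polynomial k) (RatFunc k) (Polynomial.X - Polynomial.C a)
      = algebraMap (Polynomial k) (RatFunc k) 0 := h.trans (map_zero _).symm
  exact Polynomial.X_sub_C_ne_zero a
    (IsFractionRing.injective (Polynomial k) (RatFunc k) h2)

lemma LF_ne_A (a c : k) : LF a ≠ A c := by
  intro h
  rw [A_eq] at h
  have := IsFractionRing.injective (Polynomial k) (RatFunc k) h
  have hd := congrArg Polynomial.natDegree this
  rw [Polynomial.natDegree_X_sub_C, Polynomial.natDegree_C] at hd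
  exact one_ne_zero hd

/-- Spanning set for `UnitsQ (RatFunc k)`: constants and linear factors. -/
def SpanSet (k : Type u) [Field k] : Set (UnitsQ (RatFunc k)) :=
  {v | ∃ c : k, c ≠ 0 ∧ v = mkQ (A c)} ∪ {v | ∃ a : k, v = mkQ (LF a)}

lemma mkQ_multiset_prod (m : Multiset k) :
    mkQ (algebraMap (Polynomial k) (RatFunc k)
        ((m.map fun a => Polynomial.X - Polynomial.C a).prod))
      ∈ Submodule.span ℚ (SpanSet k) := by
  induction m using Multiset.induction_on with
  | empty => simp [mkQ_one]
  | cons a m ih =>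
      rw [Multiset.map_cons, Multiset.prod_cons, map_mul]
      have hne : algebraMap (Polynomial k) (RatFunc k)
          ((m.map fun a => Polynomial.X - Polynomial.C a).prod) ≠ 0 := by
        rw [Ne, map_eq_zero_iff _ (IsFractionRing.injective (Polynomial k) (RatFunc k))]
        exact Multiset.prod_ne_zero (by
          simp only [Multiset.mem_map]
          rintro ⟨b, -, hb⟩
          exact Polynomial.X_sub_C_ne_zero b hb)
      rw [show algebraMap (Polynomial k) (RatFunc k) (Polynomial.X - Polynomial.C a)
          = LF a from rfl, mkQ_mul (LF_ne_zero a) hne]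
      exact Submodule.add_mem _
        (Submodule.subset_span (Or.inr ⟨a, rfl⟩)) ih

lemma mkQ_poly_mem [IsAlgClosed k] {p : Polynomial k} (hp : p ≠ 0) :
    mkQ (algebraMap (Polynomial k) (RatFunc k) p) ∈ Submodule.span ℚ (SpanSet k) := by
  have hsplit : p.Splits := IsAlgClosed.splits p
  have hfact := Polynomial.Splits.eq_prod_roots hsplit
  rw [hfact, map_mul]
  have hC : Polynomial.C p.leadingCoeff ≠ (0 : Polynomial k) := by
    rw [Ne, Polynomial.C_eq_zero]
    exact Polynomial.leadingCoeff_ne_zero.2 hp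
  have hprod : ((p.roots.map fun a => Polynomial.X - Polynomial.C a).prod
      : Polynomial k) ≠ 0 :=
    Multiset.prod_ne_zero (by
      simp only [Multiset.mem_map]
      rintro ⟨b, -, hb⟩
      exact Polynomial.X_sub_C_ne_zero b hb)
  rw [mkQ_mul ((map_ne_zero_iff _
      (IsFractionRing.injective (Polynomial k) (RatFunc k))).2 hC)
    ((map_ne_zero_iff _
      (IsFractionRing.injective (Polynomial k) (RatFunc k))).2 hprod)]
  refine Submodule.add_mem _ ?_ (mkQ_multiset_prod p.roots)
  refine Submodule.subset_span (Or.inl ⟨p.leadingCoeff,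
    Polynomial.leadingCoeff_ne_zero.2 hp, ?_⟩)
  rw [A_eq]

lemma span_SpanSet_top [IsAlgClosed k] :
    Submodule.span ℚ (SpanSet k) = ⊤ := by
  rw [eq_top_iff, ← span_mkQ_top]
  refine Submodule.span_le.2 ?_
  rintro _ ⟨f, hf, rfl⟩
  rw [← RatFunc.num_div_denom f]
  have hnum : algebraMap (Polynomial k) (RatFunc k) f.num ≠ 0 :=
    (map_ne_zero_iff _ (IsFractionRing.injective (Polynomial k) (RatFunc k))).2
      (RatFunc.num_ne_zero hf)
  have hden : algebraMap (Polynomial k) (RatFunc k) f.denom ≠ 0 :=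
    (map_ne_zero_iff _ (IsFractionRing.injective (Polynomial k) (RatFunc k))).2
      f.denom_ne_zero
  rw [mkQ_div hnum hden]
  exact Submodule.sub_mem _ (mkQ_poly_mem (RatFunc.num_ne_zero hf))
    (mkQ_poly_mem f.denom_ne_zero)

lemma w3_neg_left {M : Type u} [AddCommGroup M] [Module ℚ M] (x y z : M) :
    w3 (-x) y z = -w3 x y z := by
  rw [← neg_one_smul ℚ x, w3_smul_left]; exact neg_one_smul ℚ (w3 x y z)

lemma w3_sub_left {M : Type u} [AddCommGroup M] [Module ℚ M] (x x' y z : M) :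
    w3 (x - x') y z = w3 x y z - w3 x' y z := by
  rw [sub_eq_add_neg, w3_add_left, w3_neg_left, sub_eq_add_neg]

lemma w3_neg_mid {M : Type u} [AddCommGroup M] [Module ℚ M] (x y z : M) :
    w3 x (-y) z = -w3 x y z := by
  rw [← neg_one_smul ℚ y, w3_smul_mid]; exact neg_one_smul ℚ (w3 x y z)

lemma w3_sub_mid {M : Type u} [AddCommGroup M] [Module ℚ M] (x y y' z : M) :
    w3 x (y - y') z = w3 x y z - w3 x y' z := by
  rw [sub_eq_add_neg, w3_add_mid, w3_neg_mid, sub_eq_add_neg]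

end Stmt4

end Stmt4Rat


noncomputable section Stmt4Main

namespace Stmt4

variable {k : Type u} [Field k] [IsAlgClosed k]

set_option maxHeartbeats 2000000 in
set_option synthInstance.maxHeartbeats 1000000 in
lemma main_aux
    (d3 : B2 (RatFunc k) ⊗[ℚ] UnitsQ (RatFunc k) →ₗ[ℚ] ⋀[ℚ]^3 (UnitsQ (RatFunc k)))
    (hd3 : IsDelta3 (RatFunc k) d3)
    (N : Submodule ℚ (⋀[ℚ]^3 (UnitsQ (RatFunc k))))
    (hgen1 : ∀ (f : RatFunc k) (a b : k), f ≠ 0 → a ≠ 0 → b ≠ 0 →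
      wedgeF 3 ![f, algebraMap k (RatFunc k) a, algebraMap k (RatFunc k) b] ∈ N)
    (hgen2 : ∀ c, d3 c ∈ N) : N = ⊤ := by
  classical
  have gen1 : ∀ (f : RatFunc k), f ≠ 0 → ∀ a b : k, a ≠ 0 → b ≠ 0 →
      w3 (mkQ f) (mkQ (A a)) (mkQ (A b)) ∈ N := by
    intro f hf a b ha hb
    have := hgen1 f a b hf ha hb
    rwa [wedgeF_eq_w3] at this
  have L1 : ∀ (a b : k), a ≠ 0 → b ≠ 0 → ∀ v : UnitsQ (RatFunc k),
      w3 v (mkQ (A a)) (mkQ (A b)) ∈ N := by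
    intro a b ha hb v
    have hv : v ∈ Submodule.span ℚ
        {w : UnitsQ (RatFunc k) | ∃ f : RatFunc k, f ≠ 0 ∧ w = mkQ f} := by
      rw [span_mkQ_top]; trivial
    induction hv using Submodule.span_induction with
    | mem w hw =>
        obtain ⟨f, hf, rfl⟩ := hw
        exact gen1 f hf a b ha hb
    | zero => rw [w3_zero_left]; exact N.zero_mem
    | add p q _ _ hp hq => rw [w3_add_left]; exact N.add_mem hp hq
    | smul q p _ hp => rw [w3_smul_left]; exact N.smul_mem q hp
  have key : ∀ a b : k, a ≠ b → ∀ y : RatFunc k, y ≠ 0 →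
      w3 (mkQ (LF a)) (mkQ (LF b)) (mkQ y)
        - w3 (mkQ (LF a)) (mkQ (A (b - a))) (mkQ y)
        - w3 (mkQ (A (b - a))) (mkQ (LF b)) (mkQ y) ∈ N := by
    intro a b hab y hy
    have hba : b - a ≠ 0 := sub_ne_zero.2 (Ne.symm hab)
    have hAc : A (b - a) ≠ 0 := A_ne_zero hba
    set x : RatFunc k := LF a / A (b - a) with hxdef
    have hx0 : x ≠ 0 := div_ne_zero (LF_ne_zero a) hAc
    have hx1 : x ≠ 1 := by
      rw [hxdef, Ne, div_eq_one_iff_eq hAc]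
      exact LF_ne_A a (b - a)
    have hsub : A (b - a) - LF a = -LF b := by
      rw [A_eq, LF, LF, ← map_sub, ← map_neg]
      congr 1
      rw [Polynomial.C_sub]
      ring
    have h1x : (1 : RatFunc k) - x = -LF b / A (b - a) := by
      rw [hxdef, ← hsub, eq_div_iff hAc, sub_mul, one_mul,
        div_mul_cancel₀ _ hAc]
    have hmx : mkQ x = mkQ (LF a) - mkQ (A (b - a)) :=
      mkQ_div (LF_ne_zero a) hAc
    have hm1x : mkQ (1 - x) = mkQ (LF b) - mkQ (A (b - a)) := by
      rw [h1x, mkQ_div (neg_ne_zero.2 (LF_ne_zero b)) hAc,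
        mkQ_neg (LF_ne_zero b)]
    have hd := hd3 x y hx0 hx1 hy
    rw [wedgeF_eq_w3, hmx, hm1x, w3_sub_left, w3_sub_mid, w3_sub_mid,
      w3_self12] at hd
    have heq : w3 (mkQ (LF a)) (mkQ (LF b)) (mkQ y)
        - w3 (mkQ (LF a)) (mkQ (A (b - a))) (mkQ y)
        - w3 (mkQ (A (b - a))) (mkQ (LF b)) (mkQ y)
        = d3 (B2.gen x ⊗ₜ[ℚ] mkQ y) := by
      rw [hd, sub_zero]
    rw [heq]
    exact hgen2 _
  have L2 : ∀ a b c : k, c ≠ 0 →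
      w3 (mkQ (LF a)) (mkQ (LF b)) (mkQ (A c)) ∈ N := by
    intro a b c hc
    by_cases hab : a = b
    · rw [hab, w3_self12]; exact N.zero_mem
    · have hba : b - a ≠ 0 := sub_ne_zero.2 (Ne.symm hab)
      have hk := key a b hab (A c) (A_ne_zero hc)
      have t1 : w3 (mkQ (LF a)) (mkQ (A (b - a))) (mkQ (A c)) ∈ N :=
        gen1 (LF a) (LF_ne_zero a) (b - a) c hba hc
      have t2 : w3 (mkQ (A (b - a))) (mkQ (LF b)) (mkQ (A c)) ∈ N := by
        rw [w3_swap12]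
        exact N.neg_mem (gen1 (LF b) (LF_ne_zero b) (b - a) c hba hc)
      have hsplit : w3 (mkQ (LF a)) (mkQ (LF b)) (mkQ (A c))
          = (w3 (mkQ (LF a)) (mkQ (LF b)) (mkQ (A c))
            - w3 (mkQ (LF a)) (mkQ (A (b - a))) (mkQ (A c))
            - w3 (mkQ (A (b - a))) (mkQ (LF b)) (mkQ (A c)))
            + (w3 (mkQ (LF a)) (mkQ (A (b - a))) (mkQ (A c))
            + w3 (mkQ (A (b - a))) (mkQ (LF b)) (mkQ (A c))) := by
        rw [sub_sub, sub_add_cancel]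
      rw [hsplit]
      exact N.add_mem hk (N.add_mem t1 t2)
  have L3 : ∀ a b c : k,
      w3 (mkQ (LF a)) (mkQ (LF b)) (mkQ (LF c)) ∈ N := by
    intro a b c
    by_cases hab : a = b
    · rw [hab, w3_self12]; exact N.zero_mem
    by_cases hbc : b = c
    · rw [hbc, w3_self23]; exact N.zero_mem
    by_cases hac : a = c
    · rw [hac, w3_self13]; exact N.zero_mem
    have hba : b - a ≠ 0 := sub_ne_zero.2 (Ne.symm hab)
    have hk := key a b hab (LF c) (LF_ne_zero c)
    have t1 : w3 (mkQ (LF a)) (mkQ (A (b - a))) (mkQ (LF c)) ∈ N := by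
      rw [w3_swap23]
      exact N.neg_mem (L2 a c (b - a) hba)
    have t2 : w3 (mkQ (A (b - a))) (mkQ (LF b)) (mkQ (LF c)) ∈ N := by
      rw [w3_swap12, w3_swap23, neg_neg]
      exact L2 b c (b - a) hba
    have hsplit : w3 (mkQ (LF a)) (mkQ (LF b)) (mkQ (LF c))
        = (w3 (mkQ (LF a)) (mkQ (LF b)) (mkQ (LF c))
          - w3 (mkQ (LF a)) (mkQ (A (b - a))) (mkQ (LF c))
          - w3 (mkQ (A (b - a))) (mkQ (LF b)) (mkQ (LF c)))
          + (w3 (mkQ (LF a)) (mkQ (A (b - a))) (mkQ (LF c))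
          + w3 (mkQ (A (b - a))) (mkQ (LF b)) (mkQ (LF c))) := by
      rw [sub_sub, sub_add_cancel]
    rw [hsplit]
    exact N.add_mem hk (N.add_mem t1 t2)
  refine eq_top_of_w3_mem N ?_
  refine w3_mem_of_span (SpanSet k) span_SpanSet_top N ?_
  rintro x hx y hy z hz
  rcases hx with ⟨a, ha, rfl⟩ | ⟨a, rfl⟩ <;>
    rcases hy with ⟨b, hb, rfl⟩ | ⟨b, rfl⟩ <;>
    rcases hz with ⟨c, hc, rfl⟩ | ⟨c, rfl⟩
  · exact gen1 (A a) (A_ne_zero ha) b c hb hc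
  · rw [w3_swap23, w3_swap12, neg_neg]
    exact L1 a b ha hb (mkQ (LF c))
  · rw [w3_swap12]
    exact N.neg_mem (L1 a c ha hc (mkQ (LF b)))
  · rw [w3_swap12, w3_swap23, neg_neg]
    exact L2 b c a ha
  · exact L1 b c hb hc (mkQ (LF a))
  · rw [w3_swap23]
    exact N.neg_mem (L2 a c b hb)
  · exact L2 a b c hc
  · exact L3 a b c

end Stmt4

end Stmt4Main

/-- `Λ³ k(t)^×` is spanned by the image of `k(t)^× ⊗ Λ²k^×` together with
the image of `δ₃`. -/
theorem statement_4 (k : Type u) [Field k] [IsAlgClosed k] [CharZero k]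
    (d3 : B2 (RatFunc k) ⊗[ℚ] UnitsQ (RatFunc k) →ₗ[ℚ] ⋀[ℚ]^3 (UnitsQ (RatFunc k)))
    (hd3 : IsDelta3 (RatFunc k) d3) :
    Submodule.span ℚ
      ({x | ∃ (f : RatFunc k) (a b : k), f ≠ 0 ∧ a ≠ 0 ∧ b ≠ 0 ∧
          x = wedgeF 3 ![f, algebraMap k (RatFunc k) a, algebraMap k (RatFunc k) b]} ∪
        Set.range d3) = ⊤ := by
  refine Stmt4.main_aux d3 hd3 _ ?_ ?_
  · intro f a b hf ha hb
    exact Submodule.subset_span (Or.inl ⟨f, a, b, hf, ha, hb, rfl⟩)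
  · intro c
    exact Submodule.subset_span (Or.inr ⟨c, rfl⟩)
end

section
/- Let F ∈ Fields_1 and m ≥ 3. The ℚ-linear map Λ^m F(t)^× → ⊕_p Λ^{m−1} F(p)^×, where the direct sum is over all monic irreducible polynomials p ∈ F[t] and the p-th component is the tame symbol ∂_{ν_p}^{(m)}, is surjective. -/
open scoped TensorProduct
open ExteriorAlgebra

open scoped TensorProduct

universe u


set_option maxHeartbeats 1600000
set_option synthInstance.maxHeartbeats 800000

section Statement5Aux

universe v

lemma mkQ_mul {F : Type v} [Field F] {x y : F} (hx : x ≠ 0) (hy : y ≠ 0) :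
    mkQ (x * y) = mkQ x + mkQ y := by
  unfold mkQ
  rw [dif_neg (mul_ne_zero hx hy), dif_neg hx, dif_neg hy]
  rw [show Units.mk0 (x * y) (mul_ne_zero hx hy) = Units.mk0 x hx * Units.mk0 y hy from
    Units.ext rfl, ofMul_mul, TensorProduct.tmul_add]

lemma mkQ_units {F : Type v} [Field F] (u : Fˣ) :
    mkQ (u : F) = (1 : ℚ) ⊗ₜ[ℤ] (Additive.ofMul u) := by
  unfold mkQ
  rw [dif_neg u.ne_zero]
  congr 1
  exact congrArg Additive.ofMul (Units.ext rfl)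

lemma unitsQ_span (K : Type v) [Field K] :
    Submodule.span ℚ {x : UnitsQ K | ∃ y : K, y ≠ 0 ∧ x = mkQ y} = ⊤ := by
  rw [Submodule.eq_top_iff']
  intro z
  induction z using TensorProduct.induction_on with
  | zero => exact zero_mem _
  | tmul q m =>
      have h1 : (1 : ℚ) ⊗ₜ[ℤ] m ∈
          Submodule.span ℚ {x : UnitsQ K | ∃ y : K, y ≠ 0 ∧ x = mkQ y} :=
        Submodule.subset_span ⟨((Additive.toMul m : Kˣ) : K), Units.ne_zero _, by
          rw [mkQ_units]; simp⟩
      have h2 : q ⊗ₜ[ℤ] m = q • ((1 : ℚ) ⊗ₜ[ℤ] m) := by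
        rw [TensorProduct.smul_tmul', smul_eq_mul, mul_one]
      rw [h2]
      exact Submodule.smul_mem _ _ h1
  | add x y hx hy => exact add_mem hx hy

variable {M : Type v} [AddCommGroup M] [Module ℚ M]

lemma wedgeV_update_add (m : ℕ) (v : Fin m → M) (i : Fin m) (x y : M) :
    wedgeV m (Function.update v i (x + y)) =
      wedgeV m (Function.update v i x) + wedgeV m (Function.update v i y) :=
  Subtype.ext ((ExteriorAlgebra.ιMulti ℚ m).map_update_add v i x y)

lemma wedgeV_update_smul (m : ℕ) (v : Fin m → M) (i : Fin m) (c : ℚ) (x : M) :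
    wedgeV m (Function.update v i (c • x)) = c • wedgeV m (Function.update v i x) :=
  Subtype.ext ((ExteriorAlgebra.ιMulti ℚ m).map_update_smul v i c x)

lemma wedgeV_update_zero (m : ℕ) (v : Fin m → M) (i : Fin m) :
    wedgeV m (Function.update v i 0) = 0 :=
  Subtype.ext ((ExteriorAlgebra.ιMulti ℚ m).map_update_zero v i)

lemma wedgeV_cons_sub (m : ℕ) (x y : M) (w : Fin m → M) :
    wedgeV (m + 1) (Fin.cons (x - y) w) =
      wedgeV (m + 1) (Fin.cons x w) - wedgeV (m + 1) (Fin.cons y w) := by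
  apply Subtype.ext
  have h := (ExteriorAlgebra.ιMulti ℚ (m + 1)).toMultilinearMap.map_update_sub
    (Fin.cons x w) 0 x y
  simp only [Fin.update_cons_zero] at h
  exact h

lemma wedge_span (m : ℕ) (S : Set M) (hS : Submodule.span ℚ S = ⊤) (x : ⋀[ℚ]^m M) :
    x ∈ Submodule.span ℚ {w : ⋀[ℚ]^m M | ∃ v : Fin m → M, (∀ i, v i ∈ S) ∧ w = wedgeV m v} := by
  set W := Submodule.span ℚ
    {w : ⋀[ℚ]^m M | ∃ v : Fin m → M, (∀ i, v i ∈ S) ∧ w = wedgeV m v} with hW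
  have key : ∀ (j : ℕ) (v : Fin m → M), (∀ i : Fin m, j ≤ (i : ℕ) → v i ∈ S) →
      wedgeV m v ∈ W := by
    intro j
    induction j with
    | zero => exact fun v hv => Submodule.subset_span ⟨v, fun i => hv i (Nat.zero_le _), rfl⟩
    | succ j ih =>
      intro v hv
      by_cases hj : j < m
      · set i0 : Fin m := ⟨j, hj⟩ with hi0
        have hmem : v i0 ∈ Submodule.span ℚ S := by rw [hS]; trivial
        have H : ∀ x ∈ Submodule.span ℚ S, wedgeV m (Function.update v i0 x) ∈ W := by
          intro x hx
          induction hx using Submodule.span_induction with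
          | mem s hs =>
            apply ih
            intro i hi
            rcases eq_or_ne i i0 with h | h
            · rw [h, Function.update_self]; exact hs
            · rw [Function.update_of_ne h]
              refine hv i ?_
              have : (i : ℕ) ≠ j := fun hij => h (Fin.ext hij)
              omega
          | zero => rw [wedgeV_update_zero]; exact zero_mem _
          | add a b _ _ iha ihb => rw [wedgeV_update_add]; exact add_mem iha ihb
          | smul c a _ iha => rw [wedgeV_update_smul]; exact Submodule.smul_mem _ _ iha
        have := H (v i0) hmem
        rwa [Function.update_eq_self] at this
      · exact ih v (fun i hi => absurd (lt_of_le_of_lt hi i.isLt) (by omega))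
  have main : ∀ (y : ExteriorAlgebra ℚ M)
      (_ : y ∈ Submodule.span ℚ (Set.range (ExteriorAlgebra.ιMulti ℚ m (M := M))))
      (h : y ∈ ⋀[ℚ]^m M), (⟨y, h⟩ : ⋀[ℚ]^m M) ∈ W := by
    intro y hy
    induction hy using Submodule.span_induction with
    | mem z hz =>
      intro h
      obtain ⟨v, rfl⟩ := hz
      have h1 : (⟨ExteriorAlgebra.ιMulti ℚ m v, h⟩ : ⋀[ℚ]^m M) = wedgeV m v := Subtype.ext rfl
      rw [h1]
      exact key m v (fun i hi => absurd (lt_of_le_of_lt hi i.isLt) (by omega))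
    | zero =>
      intro h
      have h1 : (⟨0, h⟩ : ⋀[ℚ]^m M) = 0 := Subtype.ext rfl
      rw [h1]; exact zero_mem _
    | add y z hy hz ihy ihz =>
      intro h
      have hy' : y ∈ ⋀[ℚ]^m M := by rw [← ExteriorAlgebra.ιMulti_span_fixedDegree]; exact hy
      have hz' : z ∈ ⋀[ℚ]^m M := by rw [← ExteriorAlgebra.ιMulti_span_fixedDegree]; exact hz
      have h1 : (⟨y + z, h⟩ : ⋀[ℚ]^m M) = ⟨y, hy'⟩ + ⟨z, hz'⟩ := Subtype.ext rfl
      rw [h1]; exact add_mem (ihy hy') (ihz hz')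
    | smul c y hy ihy =>
      intro h
      have hy' : y ∈ ⋀[ℚ]^m M := by rw [← ExteriorAlgebra.ιMulti_span_fixedDegree]; exact hy
      have h1 : (⟨c • y, h⟩ : ⋀[ℚ]^m M) = c • (⟨y, hy'⟩ : ⋀[ℚ]^m M) := Subtype.ext rfl
      rw [h1]; exact Submodule.smul_mem _ _ (ihy hy')
  have hx1 : (x : ExteriorAlgebra ℚ M) ∈
      Submodule.span ℚ (Set.range (ExteriorAlgebra.ιMulti ℚ m (M := M))) := by
    rw [ExteriorAlgebra.ιMulti_span_fixedDegree]; exact x.2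
  have := main x.1 hx1 x.2
  simpa using this

lemma wedge_span_field (K : Type v) [Field K] (m : ℕ) (x : ⋀[ℚ]^m (UnitsQ K)) :
    x ∈ Submodule.span ℚ
      {w : ⋀[ℚ]^m (UnitsQ K) | ∃ v : Fin m → K, (∀ i, v i ≠ 0) ∧ w = wedgeF m v} := by
  have h := wedge_span m {x : UnitsQ K | ∃ y : K, y ≠ 0 ∧ x = mkQ y} (unitsQ_span K) x
  refine Submodule.span_le.mpr ?_ h
  rintro w ⟨v, hv, rfl⟩
  choose y hy1 hy2 using hv
  refine Submodule.subset_span ⟨y, hy1, ?_⟩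
  show wedgeV m v = wedgeF m y
  exact congrArg (wedgeV m) (funext fun i => hy2 i)

lemma wedgeF_eq_wedgeV {F : Type v} [Field F] (n : ℕ) (x : Fin n → F) :
    wedgeF n x = wedgeV n (fun i => mkQ (x i)) := rfl

lemma tame_unit_vanish {F K : Type v} [Field F] [Field K] {ν : F → ℤ} {res : F → K}
    (hν : IsDVal ν) {m : ℕ} {D : ⋀[ℚ]^(m + 1) (UnitsQ F) →ₗ[ℚ] ⋀[ℚ]^m (UnitsQ K)}
    (hD : IsTame ν res m D) (u : Fin (m + 1) → F)
    (hu : ∀ i, u i ≠ 0 ∧ ν (u i) = 0) : D (wedgeF (m + 1) u) = 0 := by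
  obtain ⟨π, hπ0, hπ1⟩ := hν.surj 1
  have h0 := hu 0
  have htu : ∀ i, Fin.tail u i ≠ 0 ∧ ν (Fin.tail u i) = 0 := fun i => hu i.succ
  have hc : ∀ a : F, wedgeF (m + 1) (Fin.cons a (Fin.tail u)) =
      wedgeV (m + 1) (Fin.cons (mkQ a) (fun i => mkQ (Fin.tail u i))) := by
    intro a
    rw [wedgeF_eq_wedgeV]
    congr 1
    funext i
    refine Fin.cases ?_ ?_ i
    · simp
    · intro j; simp
  have e1 : wedgeF (m + 1) u = wedgeF (m + 1) (Fin.cons (π * u 0) (Fin.tail u)) -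
      wedgeF (m + 1) (Fin.cons π (Fin.tail u)) := by
    have hu0 : u = Fin.cons (u 0) (Fin.tail u) := (Fin.cons_self_tail u).symm
    conv_lhs => rw [hu0]
    rw [hc, hc, hc]
    have hm : mkQ (u 0) = mkQ (π * u 0) - mkQ π := by
      rw [mkQ_mul hπ0 h0.1]; abel
    rw [hm]
    exact wedgeV_cons_sub m _ _ _
  have hν1 : ν (π * u 0) = 1 := by rw [hν.map_mul _ _ hπ0 h0.1, hπ1, h0.2, add_zero]
  rw [e1, map_sub,
    hD (π * u 0) (Fin.tail u) (mul_ne_zero hπ0 h0.1) hν1 htu,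
    hD π (Fin.tail u) hπ0 hπ1 htu, sub_self]

lemma finite_dvd {F : Type v} [Field F] {g : Polynomial F} (hg : g ≠ 0) :
    {q : MonicIrr F | q.1 ∣ g}.Finite := by
  classical
  rw [← Set.finite_coe_iff]
  have hex : ∀ q : {q : MonicIrr F | q.1 ∣ g},
      ∃ r ∈ (UniqueFactorizationMonoid.factors g).toFinset, Associated (q : MonicIrr F).1 r := by
    intro q
    obtain ⟨r, hr, hassoc⟩ :=
      UniqueFactorizationMonoid.exists_mem_factors_of_dvd hg (q : MonicIrr F).2.2 q.2
    exact ⟨r, Multiset.mem_toFinset.mpr hr, hassoc⟩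
  choose r hr hassoc using hex
  have hinj : Function.Injective
      (fun q => (⟨r q, hr q⟩ : {x // x ∈ (UniqueFactorizationMonoid.factors g).toFinset})) := by
    intro q1 q2 h
    have hrr : r q1 = r q2 := congrArg Subtype.val h
    have hass : Associated ((q1 : MonicIrr F)).1 ((q2 : MonicIrr F)).1 :=
      (hassoc q1).trans (hrr ▸ (hassoc q2).symm)
    exact Subtype.ext (Subtype.ext
      (Polynomial.eq_of_monic_of_associated (q1 : MonicIrr F).2.1 (q2 : MonicIrr F).2.1 hass))
  exact Finite.of_injective _ hinj

lemma MonicIrr.not_dvd {F : Type v} [Field F] {p q : MonicIrr F} (h : q ≠ p) : ¬ q.1 ∣ p.1 := by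
  intro hdvd
  exact h (Subtype.ext (Polynomial.eq_of_monic_of_associated q.2.1 p.2.1
    (q.2.2.associated_of_dvd p.2.2 hdvd)))

end Statement5Aux

/-- surjectivity of the total tame-symbol map
`Λ^m F(t)^× → ⊕_p Λ^{m-1} F(p)^×`, `m = n + 3 ≥ 3`. -/
theorem statement_5 (k F : Type u) [Field k] [IsAlgClosed k] [CharZero k] [Field F]
    [Algebra k F] (hF : IsFields1 k F) (n : ℕ)
    (ν : ∀ p : MonicIrr F, RatFunc F → ℤ) (hν : ∀ p, IsNuP p (ν p))
    (res : ∀ p : MonicIrr F, RatFunc F → ResField p) (hres : ∀ p, IsResP p (ν p) (res p))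
    (D : ∀ p : MonicIrr F,
      ⋀[ℚ]^(n + 3) (UnitsQ (RatFunc F)) →ₗ[ℚ] ⋀[ℚ]^(n + 2) (UnitsQ (ResField p)))
    (hD : ∀ p, IsTame (ν p) (res p) (n + 2) (D p))
    (a : ∀ p : MonicIrr F, ⋀[ℚ]^(n + 2) (UnitsQ (ResField p)))
    (ha : {p | a p ≠ 0}.Finite) :
    ∃ b : ⋀[ℚ]^(n + 3) (UnitsQ (RatFunc F)), ∀ p, D p b = a p := by
  classical
  -- Step 1: lifting a single wedge at a single prime `p`.
  have lift_wedge : ∀ (p : MonicIrr F) (x : Fin (n + 2) → ResField p), (∀ i, x i ≠ 0) →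
      ∃ b : ⋀[ℚ]^(n + 3) (UnitsQ (RatFunc F)), D p b = wedgeF (n + 2) x ∧
        (∀ q, q ≠ p → p.1.natDegree ≤ q.1.natDegree → D q b = 0) ∧
        {q : MonicIrr F | D q b ≠ 0}.Finite := by
    intro p x hx
    have hmk : ∀ i, ∃ g : Polynomial F, AdjoinRoot.mk p.1 g = x i :=
      fun i => AdjoinRoot.mk_surjective (x i)
    choose g hg using hmk
    have hmk' : ∀ i, AdjoinRoot.mk p.1 (g i %ₘ p.1) = x i := by
      intro i
      rw [Polynomial.modByMonic_eq_sub_mul_div _ p.1, map_sub, map_mul,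
        AdjoinRoot.mk_self, zero_mul, sub_zero, hg]
    have hg'0 : ∀ i, g i %ₘ p.1 ≠ 0 := by
      intro i h
      apply hx i
      rw [← hmk' i, h, map_zero]; rfl
    have hdeg : ∀ i, (g i %ₘ p.1).natDegree < p.1.natDegree := by
      intro i
      exact Polynomial.natDegree_lt_natDegree (hg'0 i)
        (Polynomial.degree_modByMonic_lt _ p.2.1)
    have hpg' : ∀ i, ¬ p.1 ∣ (g i %ₘ p.1) := by
      intro i hdvd
      apply hx i
      rw [← hmk' i]
      exact AdjoinRoot.mk_eq_zero.mpr hdvd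
    have hp0 : p.1 ≠ 0 := p.2.1.ne_zero
    have hP0 : algebraMap (Polynomial F) (RatFunc F) p.1 ≠ 0 :=
      RatFunc.algebraMap_ne_zero hp0
    have hG0 : ∀ i, algebraMap (Polynomial F) (RatFunc F) (g i %ₘ p.1) ≠ 0 :=
      fun i => RatFunc.algebraMap_ne_zero (hg'0 i)
    refine ⟨wedgeF (n + 3) (Fin.cons (algebraMap (Polynomial F) (RatFunc F) p.1)
      (fun i => algebraMap (Polynomial F) (RatFunc F) (g i %ₘ p.1))), ?_, ?_, ?_⟩
    · have h1 := hD p (algebraMap (Polynomial F) (RatFunc F) p.1)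
        (fun i => algebraMap (Polynomial F) (RatFunc F) (g i %ₘ p.1)) hP0 (hν p).2.1
        (fun i => ⟨hG0 i, (hν p).2.2 (g i %ₘ p.1) (hg'0 i) (hpg' i)⟩)
      have h2 : wedgeF (n + 2)
          (fun i => res p (algebraMap (Polynomial F) (RatFunc F) (g i %ₘ p.1))) =
          wedgeF (n + 2) x := by
        congr 1
        funext i
        rw [(hres p).2 (g i %ₘ p.1)]
        exact hmk' i
      exact h1.trans h2
    · intro q hqp hdq
      refine tame_unit_vanish (hν q).1 (hD q) _ ?_
      intro i
      rcases Fin.eq_zero_or_eq_succ i with rfl | ⟨j, rfl⟩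
      · simp only [Fin.cons_zero]
        exact ⟨hP0, (hν q).2.2 p.1 hp0 (MonicIrr.not_dvd hqp)⟩
      · simp only [Fin.cons_succ]
        refine ⟨hG0 j, (hν q).2.2 _ (hg'0 j) ?_⟩
        intro hdvd
        have h3 := Polynomial.natDegree_le_of_dvd hdvd (hg'0 j)
        have h4 := hdeg j
        omega
    · refine Set.Finite.subset (Set.Finite.union (finite_dvd hp0)
        (Set.finite_iUnion (fun i : Fin (n + 2) => finite_dvd (hg'0 i)))) ?_
      intro q hq
      by_contra hnot
      simp only [Set.mem_union, Set.mem_setOf_eq, Set.mem_iUnion, not_or, not_exists] at hnot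
      apply hq
      refine tame_unit_vanish (hν q).1 (hD q) _ ?_
      intro i
      rcases Fin.eq_zero_or_eq_succ i with rfl | ⟨j, rfl⟩
      · simp only [Fin.cons_zero]
        exact ⟨hP0, (hν q).2.2 p.1 hp0 hnot.1⟩
      · simp only [Fin.cons_succ]
        exact ⟨hG0 j, (hν q).2.2 _ (hg'0 j) (hnot.2 j)⟩
  -- Step 2: induction on the maximal degree of the support.
  have main : ∀ (d : ℕ) (a : ∀ p : MonicIrr F, ⋀[ℚ]^(n + 2) (UnitsQ (ResField p))),
      {p | a p ≠ 0}.Finite → (∀ p : MonicIrr F, d ≤ p.1.natDegree → a p = 0) →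
      ∃ b : ⋀[ℚ]^(n + 3) (UnitsQ (RatFunc F)), ∀ p, D p b = a p := by
    intro d
    induction d with
    | zero =>
      intro a _ h
      exact ⟨0, fun p => by rw [LinearMap.map_zero, h p (Nat.zero_le _)]⟩
    | succ d ih =>
      intro a ha hd
      have hsolve : ∀ p : MonicIrr F, p.1.natDegree = d →
          ∃ b, D p b = a p ∧ (∀ q, q ≠ p → d ≤ q.1.natDegree → D q b = 0) ∧
            {q : MonicIrr F | D q b ≠ 0}.Finite := by
        intro p hp
        set T : Submodule ℚ (⋀[ℚ]^(n + 3) (UnitsQ (RatFunc F))) :=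
          { carrier := {b | (∀ q, q ≠ p → d ≤ q.1.natDegree → D q b = 0) ∧
              {q : MonicIrr F | D q b ≠ 0}.Finite}
            add_mem' := by
              rintro b c ⟨hb1, hb2⟩ ⟨hc1, hc2⟩
              refine ⟨fun q hq hdq => by rw [LinearMap.map_add, hb1 q hq hdq, hc1 q hq hdq, add_zero], ?_⟩
              refine Set.Finite.subset (hb2.union hc2) ?_
              intro q hq
              by_contra hn
              simp only [Set.mem_union, Set.mem_setOf_eq, not_or, not_not] at hn
              exact hq (by rw [LinearMap.map_add, hn.1, hn.2, add_zero])
            zero_mem' := by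
              refine ⟨fun q _ _ => LinearMap.map_zero _, ?_⟩
              refine Set.Finite.subset Set.finite_empty ?_
              intro q hq
              exact absurd (LinearMap.map_zero (D q)) hq
            smul_mem' := by
              rintro c b ⟨hb1, hb2⟩
              refine ⟨fun q hq hdq => by rw [LinearMap.map_smul, hb1 q hq hdq, smul_zero], ?_⟩
              refine Set.Finite.subset hb2 ?_
              intro q hq
              by_contra hn
              simp only [Set.mem_setOf_eq, not_not] at hn
              exact hq (by rw [LinearMap.map_smul, hn, smul_zero]) } with hT
        have hmap : a p ∈ Submodule.map (D p) T := by
          have hsp := wedge_span_field (ResField p) (n + 2) (a p)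
          refine Submodule.span_le.mpr ?_ hsp
          rintro w ⟨x, hx, rfl⟩
          obtain ⟨b, h1, h2, h3⟩ := lift_wedge p x hx
          refine ⟨b, ?_, h1⟩
          exact show (∀ q, q ≠ p → d ≤ q.1.natDegree → D q b = 0) ∧
            {q : MonicIrr F | D q b ≠ 0}.Finite from
            ⟨fun q hq hdq => h2 q hq (hp ▸ hdq), h3⟩
        obtain ⟨b, hbT, hbD⟩ := hmap
        have hbT' : (∀ q, q ≠ p → d ≤ q.1.natDegree → D q b = 0) ∧
            {q : MonicIrr F | D q b ≠ 0}.Finite := hbT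
        exact ⟨b, hbD, hbT'.1, hbT'.2⟩
      have hchoice : ∀ p : MonicIrr F, ∃ b,
          (p.1.natDegree = d → D p b = a p ∧
            (∀ q, q ≠ p → d ≤ q.1.natDegree → D q b = 0) ∧
            {q : MonicIrr F | D q b ≠ 0}.Finite) ∧
          (p.1.natDegree ≠ d → b = 0) := by
        intro p
        by_cases h : p.1.natDegree = d
        · obtain ⟨b, hb⟩ := hsolve p h
          exact ⟨b, fun _ => hb, fun h' => absurd h h'⟩
        · exact ⟨0, fun h' => absurd h' h, fun _ => rfl⟩
      choose B hB1 hB2 using hchoice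
      set S : Finset (MonicIrr F) := ha.toFinset.filter (fun p => p.1.natDegree = d) with hS
      have hSdeg : ∀ p ∈ S, p.1.natDegree = d := by
        intro p hp
        exact (Finset.mem_filter.mp hp).2
      have hDb1 : ∀ q : MonicIrr F, D q (∑ p ∈ S, B p) = ∑ p ∈ S, D q (B p) :=
        fun q => map_sum (D q) (fun p => B p) S
      have ha'fin : {q | a q - D q (∑ p ∈ S, B p) ≠ 0}.Finite := by
        refine Set.Finite.subset (ha.union (Set.Finite.biUnion S.finite_toSet
          (fun p hp => (hB1 p (hSdeg p hp)).2.2))) ?_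
        intro q hq
        by_contra hn
        simp only [Set.mem_union, Set.mem_setOf_eq, Set.mem_iUnion, not_or, not_not,
          not_exists, Finset.mem_coe] at hn
        apply hq
        have hz : ∀ p ∈ S, D q (B p) = 0 := fun p hp => hn.2 p hp
        show a q - D q (∑ p ∈ S, B p) = 0
        rw [hn.1, hDb1, Finset.sum_eq_zero hz, sub_zero]
      have ha'd : ∀ q : MonicIrr F, d ≤ q.1.natDegree →
          a q - D q (∑ p ∈ S, B p) = 0 := by
        intro q hq
        by_cases hqd : q.1.natDegree = d
        · by_cases hqS : q ∈ S
          · have hsum : ∑ p ∈ S, D q (B p) = D q (B q) := by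
              refine Finset.sum_eq_single_of_mem q hqS ?_
              intro p hp hpq
              exact (hB1 p (hSdeg p hp)).2.1 q (Ne.symm hpq) hq
            rw [hDb1, hsum, (hB1 q hqd).1, sub_self]
          · have haq : a q = 0 := by
              by_contra hne
              exact hqS (Finset.mem_filter.mpr ⟨ha.mem_toFinset.mpr hne, hqd⟩)
            have hsum : ∑ p ∈ S, D q (B p) = 0 := by
              refine Finset.sum_eq_zero ?_
              intro p hp
              have hpq : p ≠ q := fun h => hqS (h ▸ hp)
              exact (hB1 p (hSdeg p hp)).2.1 q (Ne.symm hpq) hq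
            rw [hDb1, hsum, haq, sub_zero]
        · have hq' : d + 1 ≤ q.1.natDegree := by omega
          have haq : a q = 0 := hd q hq'
          have hsum : ∑ p ∈ S, D q (B p) = 0 := by
            refine Finset.sum_eq_zero ?_
            intro p hp
            have hpq : p ≠ q := fun h => hqd (h ▸ hSdeg p hp)
            exact (hB1 p (hSdeg p hp)).2.1 q (Ne.symm hpq) hq
          rw [hDb1, hsum, haq, sub_zero]
      obtain ⟨b₂, hb₂⟩ := ih (fun q => a q - D q (∑ p ∈ S, B p)) ha'fin ha'd
      refine ⟨(∑ p ∈ S, B p) + b₂, ?_⟩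
      intro q
      rw [LinearMap.map_add, hb₂ q]
      abel
  refine main ((ha.toFinset.sup fun p => p.1.natDegree) + 1) a ha ?_
  intro p hp
  by_contra h
  have h1 : p ∈ ha.toFinset := ha.mem_toFinset.mpr h
  have h2 : p.1.natDegree ≤ ha.toFinset.sup (fun p : MonicIrr F => p.1.natDegree) :=
    Finset.le_sup (f := fun p : MonicIrr F => p.1.natDegree) h1
  omega
end
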